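/- (MaxEnt upper bound via AMEF) For any continuous random variable X on ℝ with density q satisfying E_q[|X|^l] = η < ∞ and finite differential entropy, H(q) ≤ b_l + (1/l)·log η, where b_l = log 2 + log Γ(1/l) − log l + (1/l)(1 + log l). -/

import Mathlib

open Real MeasureTheory

open Set in

lemma my_integrable_comp_abs {f : ℝ → ℝ} (hf : IntegrableOn f (Ioi 0)) :
    Integrable (fun x => f |x|) := by
  have hf' : IntegrableOn (fun x => f |x|) (Ioi 0) := by
    apply hf.congr_fun (fun x hx => ?_) measurableSet_Ioi
    rw [abs_of_pos hx]
  have int_Iic : IntegrableOn (fun x ↦ f |x|) (Iic 0) := by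
    rw [← Measure.map_neg_eq_self (volume : Measure ℝ)]
    have m : MeasurableEmbedding fun x : ℝ => -x :=
      (Homeomorph.neg ℝ).measurableEmbedding
    rw [m.integrableOn_map_iff]
    simp_rw [Function.comp_def, abs_neg, neg_preimage, neg_Iic, neg_zero]
    exact Iff.mpr integrableOn_Ici_iff_integrableOn_Ioi hf'
  rw [← integrableOn_univ, ← Iic_union_Ioi (a := (0:ℝ))]
  exact int_Iic.union hf'

theorem amef_maxent_upper_bound (l : ℕ) (hl : 1 ≤ l) (q : ℝ → ℝ)
    (hq_nonneg : ∀ x, 0 ≤ q x)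
    (hq_int : Integrable q)
    (hq_one : ∫ x : ℝ, q x = 1)
    (η : ℝ)
    (hmom_int : Integrable (fun x : ℝ => |x| ^ l * q x))
    (hmom : ∫ x : ℝ, |x| ^ l * q x = η)
    (hent_int : Integrable (fun x : ℝ => q x * Real.log (q x)))
    (b : ℝ)
    (hb : b = Real.log 2 + Real.log (Real.Gamma (1 / l)) - Real.log l +
      (1 / l) * (1 + Real.log l)) :
    -∫ x : ℝ, q x * Real.log (q x) ≤ b + (1 / l) * Real.log η := by
  set lr : ℝ := (l : ℝ) with hlr_def
  have hlr1 : (1 : ℝ) ≤ lr := by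
    rw [hlr_def]; exact_mod_cast hl
  have hlr0 : (0 : ℝ) < lr := lt_of_lt_of_le one_pos hlr1
  -- η > 0
  have hη_pos : 0 < η := by
    have hηnn : 0 ≤ η := hmom ▸
      integral_nonneg fun x => mul_nonneg (by positivity) (hq_nonneg x)
    rcases hηnn.lt_or_eq with h | h
    · exact h
    · exfalso
      have h0 : ∫ x : ℝ, |x| ^ l * q x = 0 := by rw [hmom, ← h]
      have hae : (fun x : ℝ => |x| ^ l * q x) =ᵐ[volume] 0 := by
        rw [← integral_eq_zero_iff_of_nonneg
          (fun x => mul_nonneg (by positivity) (hq_nonneg x)) hmom_int]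
        exact h0
      have hq0 : q =ᵐ[volume] 0 := by
        have h0m : (volume : Measure ℝ) {0} = 0 := measure_singleton 0
        filter_upwards [hae, compl_mem_ae_iff.mpr h0m] with x hx hx0
        have hxne : x ≠ 0 := by simpa using hx0
        have : |x| ^ l ≠ 0 := pow_ne_zero _ (abs_ne_zero.mpr hxne)
        have := mul_eq_zero.mp hx
        tauto
      rw [integral_congr_ae hq0] at hq_one
      simp at hq_one
  set lam : ℝ := (lr * η)⁻¹ with hlam_def
  have hlam : 0 < lam := by positivity
  set Z : ℝ := 2 * (lam ^ (-1 / lr) * Real.Gamma (1 / lr + 1)) with hZ_def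
  have hGpos : 0 < Real.Gamma (1 / lr + 1) := Real.Gamma_pos_of_pos (by positivity)
  have hZpos : 0 < Z := by positivity
  set C : ℝ := Z⁻¹ with hC_def
  have hCpos : 0 < C := by positivity
  set p : ℝ → ℝ := fun x => C * Real.exp (-lam * |x| ^ l) with hp_def
  have hp_pos : ∀ x, 0 < p x := fun x => by positivity
  -- integrability of the exponential
  have hIoi : IntegrableOn (fun x : ℝ => Real.exp (-lam * x ^ l)) (Set.Ioi 0) := by
    have h := integrableOn_rpow_mul_exp_neg_mul_rpow (s := 0) (p := lr) (b := lam)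
      (by norm_num) hlr0 hlam
    apply h.congr_fun (fun x hx => ?_) measurableSet_Ioi
    rw [rpow_zero, one_mul, ← rpow_natCast x l]
  have hg_int : Integrable (fun x : ℝ => Real.exp (-lam * |x| ^ l)) :=
    my_integrable_comp_abs (f := fun t => Real.exp (-lam * t ^ l)) hIoi
  -- value of the normalizing integral
  have hg_val : ∫ x : ℝ, Real.exp (-lam * |x| ^ l) = Z := by
    rw [integral_comp_abs (f := fun t => Real.exp (-lam * t ^ l))]
    have : ∫ x in Set.Ioi (0:ℝ), Real.exp (-lam * x ^ l)
        = ∫ x in Set.Ioi (0:ℝ), Real.exp (-lam * x ^ lr) := by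
      refine setIntegral_congr_fun measurableSet_Ioi (fun x hx => ?_)
      rw [← rpow_natCast x l]
    rw [this, integral_exp_neg_mul_rpow hlr0 hlam, hZ_def]
  have hp_int : Integrable p := hg_int.const_mul C
  have hp_one : ∫ x, p x = 1 := by
    rw [hp_def]
    simp only []
    rw [integral_const_mul, hg_val, hC_def, inv_mul_cancel₀ hZpos.ne']
  -- log p decomposition
  have hlogp : ∀ x, Real.log (p x) = Real.log C - lam * |x| ^ l := by
    intro x
    rw [hp_def]
    simp only []
    rw [Real.log_mul hCpos.ne' (Real.exp_ne_zero _), Real.log_exp]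
    ring
  have hqlogp_int : Integrable (fun x => q x * Real.log (p x)) := by
    have : (fun x => q x * Real.log (p x))
        = fun x => q x * Real.log C - lam * (|x| ^ l * q x) := by
      funext x; rw [hlogp x]; ring
    rw [this]
    exact (hq_int.mul_const _).sub (hmom_int.const_mul _)
  have hqlogp_val : ∫ x, q x * Real.log (p x) = Real.log C - lam * η := by
    have h1 : (fun x => q x * Real.log (p x))
        = fun x => q x * Real.log C - lam * (|x| ^ l * q x) := by
      funext x; rw [hlogp x]; ring
    rw [h1, integral_sub (hq_int.mul_const _) (hmom_int.const_mul _),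
      integral_mul_const, integral_const_mul, hq_one, hmom, one_mul]
  -- pointwise inequality
  have hpt : ∀ x, -(q x * Real.log (q x)) ≤ (p x - q x) - q x * Real.log (p x) := by
    intro x
    rcases (hq_nonneg x).lt_or_eq with hq | hq
    · have hp0 := hp_pos x
      have hlog := Real.log_le_sub_one_of_pos (show 0 < p x / q x by positivity)
      rw [Real.log_div hp0.ne' hq.ne'] at hlog
      have := mul_le_mul_of_nonneg_left hlog hq.le
      have hne : q x ≠ 0 := hq.ne'
      field_simp at this
      nlinarith
    · rw [← hq]
      simp only [mul_comm, mul_zero, zero_mul, neg_zero, sub_zero]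
      nlinarith [hp_pos x]
  -- integrate
  have hmain : -∫ x, q x * Real.log (q x) ≤ -Real.log C + lam * η := by
    have hL : Integrable (fun x => -(q x * Real.log (q x))) := hent_int.neg
    have hpq : Integrable (fun x => p x - q x) := hp_int.sub hq_int
    have hR : Integrable (fun x => (p x - q x) - q x * Real.log (p x)) :=
      hpq.sub hqlogp_int
    have := integral_mono hL hR hpt
    rw [integral_neg] at this
    rw [integral_sub hpq hqlogp_int, integral_sub hp_int hq_int,
      hp_one, hq_one, hqlogp_val] at this
    linarith
  refine hmain.trans_eq ?_
  -- arithmetic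
  have hlogC : Real.log C = -(Real.log 2 + (-1 / lr) * Real.log lam
      + Real.log (Real.Gamma (1 / lr + 1))) := by
    rw [hC_def, Real.log_inv, hZ_def,
      Real.log_mul (by norm_num) (by positivity),
      Real.log_mul (by positivity) hGpos.ne', Real.log_rpow hlam]
    ring
  have hGam1 : Real.log (Real.Gamma (1 / lr + 1))
      = Real.log (1 / lr) + Real.log (Real.Gamma (1 / lr)) := by
    rw [Real.Gamma_add_one (by positivity),
      Real.log_mul (by positivity) (Real.Gamma_pos_of_pos (by positivity)).ne']
  have hloglam : Real.log lam = -(Real.log lr + Real.log η) := by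
    rw [hlam_def, Real.log_inv, Real.log_mul hlr0.ne' hη_pos.ne']
  have hlamη : lam * η = 1 / lr := by
    rw [hlam_def]; field_simp
  rw [hlogC, hGam1, hloglam, hlamη, hb]
  rw [Real.log_div one_ne_zero hlr0.ne', Real.log_one]
  ring
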